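/- Let A_k, A ⊂ ℝ^N be nonempty compact sets with d_H(A_k, A) → 0 (Hausdorff distance), and suppose each A_k and A are contained in a fixed closed ball B̄(0, R). Suppose furthermore that all sets A_k and A have at most one connected component meeting any ball of radius δ/2, for a uniform δ > 0. Then for all sufficiently large k there is a bijection between the connected components of A_k and those of A matching each component of A_k to a component of A within Hausdorff distance d_H(A_k, A) + δ/4. -/

import Mathlib

open Set Metric

/-- The set of connected components of a set B. -/
def comps {E : Type*} [TopologicalSpace E] (B : Set E) : Set (Set E) :=
  {C | ∃ x ∈ B, C = connectedComponentIn B x}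

section Stmt15Aux

variable {E : Type*} [MetricSpace E]

private lemma comps_eq_comp {T : Set E} {C : Set E} (hC : C ∈ comps T) {y : E} (hy : y ∈ C) :
    C = connectedComponentIn T y := by
  obtain ⟨w, hw, rfl⟩ := hC
  exact connectedComponentIn_eq hy

private lemma comps_subset {T : Set E} {C : Set E} (hC : C ∈ comps T) : C ⊆ T := by
  obtain ⟨w, hw, rfl⟩ := hC
  exact connectedComponentIn_subset T w

private lemma core {S T : Set E} {δ ε : ℝ} (hδ : 0 < δ) (hε0 : 0 ≤ ε) (hεδ : ε < δ / 4)
    (hsepT : ∀ C ∈ comps T, ∀ C' ∈ comps T, ∀ z,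
      (C ∩ ball z (δ / 2)).Nonempty → (C' ∩ ball z (δ / 2)).Nonempty → C = C')
    (hclose : ∀ x ∈ S, ∃ y ∈ T, dist x y ≤ ε)
    {C : Set E} (hC : C ∈ comps S)
    {x1 x2 : E} (hx1 : x1 ∈ C) (hx2 : x2 ∈ C)
    {y1 y2 : E} (hy1 : y1 ∈ T) (hy2 : y2 ∈ T)
    (h1 : dist x1 y1 ≤ ε) (h2 : dist x2 y2 ≤ ε) :
    connectedComponentIn T y1 = connectedComponentIn T y2 := by
  have same : ∀ y ∈ T, ∀ y' ∈ T, ∀ z : E, dist z y < δ / 2 → dist z y' < δ / 2 →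
      connectedComponentIn T y = connectedComponentIn T y' := by
    intro y hy y' hy' z hzy hzy'
    exact hsepT _ ⟨y, hy, rfl⟩ _ ⟨y', hy', rfl⟩ z
      ⟨y, mem_connectedComponentIn hy, mem_ball.2 (by rwa [dist_comm])⟩
      ⟨y', mem_connectedComponentIn hy', mem_ball.2 (by rwa [dist_comm])⟩
  set D := connectedComponentIn T y1 with hD
  set W : Set E := {x | x ∈ C ∧ ∃ y ∈ T, dist x y ≤ ε ∧ y ∈ D} with hW
  set W' : Set E := {x | x ∈ C ∧ ∃ y ∈ T, dist x y ≤ ε ∧ y ∉ D} with hW'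
  have hCS : C ⊆ S := comps_subset hC
  have hconn : IsPreconnected C := by
    obtain ⟨w, hw, rfl⟩ := hC
    exact isPreconnected_connectedComponentIn
  -- key: nearby points of C select points of T in the same component
  have key : ∀ x y x' y', x ∈ C → y ∈ T → dist x y ≤ ε → x' ∈ C → y' ∈ T →
      dist x' y' ≤ ε → dist x' x < δ / 4 →
      connectedComponentIn T y' = connectedComponentIn T y := by
    intro x y x' y' hx hy hxy hx' hy' hx'y' hdist
    refine same y' hy' y hy x ?_ (by linarith)
    have h3 : dist x y' ≤ dist x x' + dist x' y' := dist_triangle _ _ _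
    rw [dist_comm] at hdist
    linarith
  set U : Set E := ⋃ x ∈ W, ball x (δ / 4) with hU
  set U' : Set E := ⋃ x ∈ W', ball x (δ / 4) with hU'
  have hUopen : IsOpen U := isOpen_biUnion fun _ _ => isOpen_ball
  have hU'open : IsOpen U' := isOpen_biUnion fun _ _ => isOpen_ball
  have memW : ∀ x ∈ C, x ∈ U → x ∈ W := by
    intro x hx hxU
    obtain ⟨x0, hx0W, hxball⟩ := mem_iUnion₂.1 hxU
    obtain ⟨hx0C, y0, hy0T, hx0y0, hy0D⟩ := hx0W
    obtain ⟨y, hyT, hxy⟩ := hclose x (hCS hx)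
    have hcomp := key x0 y0 x y hx0C hy0T hx0y0 hx hyT hxy (mem_ball.1 hxball)
    have hy0eq : connectedComponentIn T y0 = D := (connectedComponentIn_eq hy0D).symm
    refine ⟨hx, y, hyT, hxy, ?_⟩
    have : y ∈ connectedComponentIn T y := mem_connectedComponentIn hyT
    rwa [hcomp, hy0eq] at this
  have memW' : ∀ x ∈ C, x ∈ U' → x ∈ W' := by
    intro x hx hxU
    obtain ⟨x0, hx0W, hxball⟩ := mem_iUnion₂.1 hxU
    obtain ⟨hx0C, y0, hy0T, hx0y0, hy0D⟩ := hx0W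
    obtain ⟨y, hyT, hxy⟩ := hclose x (hCS hx)
    have hcomp := key x0 y0 x y hx0C hy0T hx0y0 hx hyT hxy (mem_ball.1 hxball)
    refine ⟨hx, y, hyT, hxy, fun hyD => hy0D ?_⟩
    have hyeq : connectedComponentIn T y = D := (connectedComponentIn_eq hyD).symm
    have : y0 ∈ connectedComponentIn T y0 := mem_connectedComponentIn hy0T
    rwa [← hcomp, hyeq] at this
  have hdisj : ∀ x, x ∈ W → x ∈ W' → False := by
    intro x ⟨hxC, y, hyT, hxy, hyD⟩ ⟨_, y', hy'T, hxy', hy'D⟩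
    have hcomp := same y hyT y' hy'T x (by linarith) (by linarith)
    have hyeq : connectedComponentIn T y = D := (connectedComponentIn_eq hyD).symm
    have : y' ∈ connectedComponentIn T y' := mem_connectedComponentIn hy'T
    rw [← hcomp, hyeq] at this
    exact hy'D this
  by_cases hy2D : y2 ∈ D
  · exact connectedComponentIn_eq hy2D
  · exfalso
    have hx1W : x1 ∈ W := ⟨hx1, y1, hy1, h1, mem_connectedComponentIn hy1⟩
    have hx2W' : x2 ∈ W' := ⟨hx2, y2, hy2, h2, hy2D⟩
    have hballself : ∀ x : E, x ∈ ball x (δ / 4) := fun x => mem_ball_self (by linarith)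
    have hcover : C ⊆ U ∪ U' := by
      intro x hx
      obtain ⟨y, hyT, hxy⟩ := hclose x (hCS hx)
      by_cases hyD : y ∈ D
      · exact Or.inl (mem_iUnion₂.2 ⟨x, ⟨hx, y, hyT, hxy, hyD⟩, hballself x⟩)
      · exact Or.inr (mem_iUnion₂.2 ⟨x, ⟨hx, y, hyT, hxy, hyD⟩, hballself x⟩)
    obtain ⟨x, hxC, hxU, hxU'⟩ := hconn U U' hUopen hU'open hcover
      ⟨x1, hx1, mem_iUnion₂.2 ⟨x1, hx1W, hballself x1⟩⟩
      ⟨x2, hx2, mem_iUnion₂.2 ⟨x2, hx2W', hballself x2⟩⟩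
    exact hdisj x (memW x hxC hxU) (memW' x hxC hxU')

private lemma exu {S T : Set E} {δ ε : ℝ} (hδ : 0 < δ) (hε0 : 0 ≤ ε) (hεδ : ε < δ / 4)
    (hsepT : ∀ C ∈ comps T, ∀ C' ∈ comps T, ∀ z,
      (C ∩ ball z (δ / 2)).Nonempty → (C' ∩ ball z (δ / 2)).Nonempty → C = C')
    (hclose : ∀ x ∈ S, ∃ y ∈ T, dist x y ≤ ε)
    (C : comps S) :
    ∃! C' : comps T, ∃ x ∈ (C : Set E), ∃ y ∈ (C' : Set E), dist x y ≤ ε := by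
  obtain ⟨w, hw, hCeq⟩ := C.2
  have hwC : w ∈ (C : Set E) := hCeq ▸ mem_connectedComponentIn hw
  obtain ⟨y0, hy0T, hwy0⟩ := hclose w (comps_subset C.2 hwC)
  refine ⟨⟨connectedComponentIn T y0, y0, hy0T, rfl⟩,
    ⟨w, hwC, y0, mem_connectedComponentIn hy0T, hwy0⟩, ?_⟩
  rintro ⟨D', hD'⟩ ⟨x', hx', y', hy'D, hx'y'⟩
  have hy'T : y' ∈ T := comps_subset hD' hy'D
  have hcomp := core hδ hε0 hεδ hsepT hclose C.2 hx' hwC hy'T hy0T hx'y' hwy0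
  exact Subtype.ext (by simpa [comps_eq_comp hD' hy'D] using hcomp)

end Stmt15Aux

/-- Component matching under Hausdorff convergence: if compact sets A_k → A in
Hausdorff distance inside a fixed ball, and the connected components of each set
are uniformly δ-separated (at most one component meets any ball of radius δ/2),
then eventually the components of A_k and A are in bijection, matched components
being Hausdorff-close within d_H(A_k, A) + δ/4. -/
theorem stmt15 (N : ℕ) (R δ : ℝ) (hR : 0 < R) (hδ : 0 < δ)
    (A : ℕ → Set (EuclideanSpace ℝ (Fin N))) (A' : Set (EuclideanSpace ℝ (Fin N)))
    (hAk : ∀ k, IsCompact (A k)) (hAkne : ∀ k, (A k).Nonempty)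
    (hA' : IsCompact A') (hA'ne : A'.Nonempty)
    (hAkball : ∀ k, A k ⊆ closedBall (0 : EuclideanSpace ℝ (Fin N)) R)
    (hA'ball : A' ⊆ closedBall (0 : EuclideanSpace ℝ (Fin N)) R)
    (hconv : Filter.Tendsto (fun k => hausdorffDist (A k) A') Filter.atTop (nhds 0))
    (hsepk : ∀ k, ∀ C ∈ comps (A k), ∀ C' ∈ comps (A k), ∀ z,
      (C ∩ ball z (δ / 2)).Nonempty → (C' ∩ ball z (δ / 2)).Nonempty → C = C')
    (hsep' : ∀ C ∈ comps A', ∀ C' ∈ comps A', ∀ z,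
      (C ∩ ball z (δ / 2)).Nonempty → (C' ∩ ball z (δ / 2)).Nonempty → C = C') :
    ∃ K : ℕ, ∀ k ≥ K, ∃ f : comps (A k) ≃ comps A',
      ∀ C : comps (A k),
        hausdorffDist (C : Set (EuclideanSpace ℝ (Fin N))) ((f C : Set (EuclideanSpace ℝ (Fin N)))) ≤
          hausdorffDist (A k) A' + δ / 4 := by
  have hev : ∀ᶠ k in Filter.atTop, hausdorffDist (A k) A' < δ / 4 :=
    hconv.eventually_lt_const (by linarith)
  obtain ⟨K, hK⟩ := Filter.eventually_atTop.1 hev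
  refine ⟨K, fun k hk => ?_⟩
  set ε := hausdorffDist (A k) A' with hεdef
  have hε4 : ε < δ / 4 := hK k hk
  have hε0 : 0 ≤ ε := hausdorffDist_nonneg
  have hne : EMetric.hausdorffEdist (A k) A' ≠ ⊤ :=
    hausdorffEdist_ne_top_of_nonempty_of_bounded (hAkne k) hA'ne
      (hAk k).isBounded hA'.isBounded
  have hclose1 : ∀ x ∈ A k, ∃ y ∈ A', dist x y ≤ ε := by
    intro x hx
    obtain ⟨y, hy, hdy⟩ := hA'.exists_infDist_eq_dist hA'ne x
    exact ⟨y, hy, hdy ▸ infDist_le_hausdorffDist_of_mem hx hne⟩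
  have hclose2 : ∀ y ∈ A', ∃ x ∈ A k, dist y x ≤ ε := by
    intro y hy
    obtain ⟨x, hx, hdx⟩ := (hAk k).exists_infDist_eq_dist (hAkne k) y
    refine ⟨x, hx, ?_⟩
    rw [← hdx, hεdef, hausdorffDist_comm]
    exact infDist_le_hausdorffDist_of_mem hy (by rw [EMetric.hausdorffEdist_comm]; exact hne)
  have exu1 : ∀ C : comps (A k), ∃! C' : comps A',
      ∃ x ∈ (C : Set (EuclideanSpace ℝ (Fin N))), ∃ y ∈ (C' : Set (EuclideanSpace ℝ (Fin N))), dist x y ≤ ε :=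
    fun C => exu hδ hε0 hε4 hsep' hclose1 C
  have exu2 : ∀ C' : comps A', ∃! C : comps (A k),
      ∃ y ∈ (C' : Set (EuclideanSpace ℝ (Fin N))), ∃ x ∈ (C : Set (EuclideanSpace ℝ (Fin N))), dist y x ≤ ε :=
    fun C' => exu hδ hε0 hε4 (hsepk k) hclose2 C'
  set f : comps (A k) → comps A' := fun C => (exu1 C).choose with hfdef
  set g : comps A' → comps (A k) := fun C' => (exu2 C').choose with hgdef
  have hf : ∀ C : comps (A k), ∃ x ∈ (C : Set (EuclideanSpace ℝ (Fin N))), ∃ y ∈ ((f C) : Set (EuclideanSpace ℝ (Fin N))), dist x y ≤ ε :=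
    fun C => (exu1 C).choose_spec.1
  have hg : ∀ C' : comps A', ∃ y ∈ (C' : Set (EuclideanSpace ℝ (Fin N))), ∃ x ∈ ((g C') : Set (EuclideanSpace ℝ (Fin N))), dist y x ≤ ε :=
    fun C' => (exu2 C').choose_spec.1
  have huniq1 : ∀ (C : comps (A k)) (D' : comps A'), (∃ x ∈ (C : Set (EuclideanSpace ℝ (Fin N))), ∃ y ∈ (D' : Set (EuclideanSpace ℝ (Fin N))), dist x y ≤ ε) → D' = f C :=
    fun C D' h => (exu1 C).choose_spec.2 D' h
  have huniq2 : ∀ (C' : comps A') (D : comps (A k)), (∃ y ∈ (C' : Set (EuclideanSpace ℝ (Fin N))), ∃ x ∈ (D : Set (EuclideanSpace ℝ (Fin N))), dist y x ≤ ε) → D = g C' :=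
    fun C' D h => (exu2 C').choose_spec.2 D h
  have hleft : ∀ C, g (f C) = C := by
    intro C
    obtain ⟨x, hx, y, hy, hxy⟩ := hf C
    exact (huniq2 (f C) C ⟨y, hy, x, hx, by rwa [dist_comm]⟩).symm
  have hright : ∀ C', f (g C') = C' := by
    intro C'
    obtain ⟨y, hy, x, hx, hyx⟩ := hg C'
    exact (huniq1 (g C') C' ⟨x, hx, y, hy, by rwa [dist_comm]⟩).symm
  refine ⟨⟨f, g, hleft, hright⟩, fun C => ?_⟩
  obtain ⟨x0, hx0, y0, hy0, hxy0⟩ := hf C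
  refine hausdorffDist_le_of_infDist (by linarith) ?_ ?_
  · intro x hx
    obtain ⟨y, hyT, hxy⟩ := hclose1 x (comps_subset C.2 hx)
    have hcomp := core hδ hε0 hε4 hsep' hclose1 C.2 hx0 hx
      (comps_subset (f C).2 hy0) hyT hxy0 hxy
    have hymem : y ∈ ((f C) : Set (EuclideanSpace ℝ (Fin N))) := by
      have : y ∈ connectedComponentIn A' y := mem_connectedComponentIn hyT
      rwa [← hcomp, ← comps_eq_comp (f C).2 hy0] at this
    calc infDist x ((f C) : Set (EuclideanSpace ℝ (Fin N))) ≤ dist x y := infDist_le_dist_of_mem hymem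
      _ ≤ ε := hxy
      _ ≤ ε + δ / 4 := by linarith
  · intro y hy
    obtain ⟨x, hx, hyx⟩ := hclose2 y (comps_subset (f C).2 hy)
    have hD : connectedComponentIn (A k) x ∈ comps (A k) := ⟨x, hx, rfl⟩
    have hDeq : (⟨connectedComponentIn (A k) x, hD⟩ : comps (A k)) = C := by
      have h1 := huniq2 (f C) ⟨connectedComponentIn (A k) x, hD⟩
        ⟨y, hy, x, mem_connectedComponentIn hx, hyx⟩
      obtain ⟨x1, hx1, y1, hy1, hxy1⟩ := hf C
      have h2 := huniq2 (f C) C ⟨y1, hy1, x1, hx1, by rwa [dist_comm]⟩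
      rw [h1, ← h2]
    have hxC : x ∈ (C : Set (EuclideanSpace ℝ (Fin N))) := by
      rw [← hDeq]
      exact mem_connectedComponentIn hx
    calc infDist y (C : Set (EuclideanSpace ℝ (Fin N))) ≤ dist y x := infDist_le_dist_of_mem hxC
      _ ≤ ε := hyx
      _ ≤ ε + δ / 4 := by linarith
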